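/- Let U be an irreducible almost upper triangular transition matrix on ℕ, and let π be defined by π 0 = 1 and π a = det(Id − U_{[0,a−1]}) / ∏_{j=1}^{a} U j (j−1) for a ≥ 1. Then the invariant measure of U is unique up to a positive factor: if π' : ℕ → ℝ satisfies π' a ≥ 0 for all a, π' is not identically 0, and for every b the series ∑_a π' a · U a b converges with sum π' b, then there exists a constant c > 0 such that π' a = c · π a for every a ∈ ℕ. -/

import Mathlib

/-- `detOneSub U n = det(Id − U_{[0,n−1]})`, with `detOneSub U 0 = 1`. -/
noncomputable def detOneSub (U : ℕ → ℕ → ℝ) (n : ℕ) : ℝ :=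
  Matrix.det (1 - Matrix.of fun i j : Fin n => U i.1 j.1)

/-- Irreducibility of a matrix on `ℕ`. -/
def MatIrreducible (M : ℕ → ℕ → ℝ) : Prop :=
  ∀ i j : ℕ, ∃ (n : ℕ) (x : ℕ → ℕ), 0 < n ∧ x 0 = i ∧ x n = j ∧
    ∀ k, k < n → 0 < M (x k) (x (k + 1))

open Finset Matrix

/-- Product of subdiagonal entries `∏_{j=a+1}^b U j (j-1)`. -/
noncomputable def prodSub (U : ℕ → ℕ → ℝ) (a b : ℕ) : ℝ :=
  ∏ j ∈ Finset.Icc (a + 1) b, U j (j - 1)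

/-- The matrix obtained from `Id - U_{[0,b]}` by deleting row `i` and the last column. -/
noncomputable def cofM (U : ℕ → ℕ → ℝ) (i b : ℕ) : Matrix (Fin b) (Fin b) ℝ :=
  Matrix.of fun k l =>
    (if (if (k : ℕ) < i then (k : ℕ) else (k : ℕ) + 1) = (l : ℕ) then (1 : ℝ) else 0)
      - U (if (k : ℕ) < i then (k : ℕ) else (k : ℕ) + 1) l

lemma cofM_base (U : ℕ → ℕ → ℝ) (b : ℕ) : (cofM U b b).det = detOneSub U b := by
  unfold cofM detOneSub
  congr 1
  ext k l
  simp [Matrix.one_apply, Fin.ext_iff, k.isLt]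

lemma cofM_step (U : ℕ → ℕ → ℝ) (hut : ∀ i j, j + 1 < i → U i j = 0)
    {i m : ℕ} (him : i ≤ m) :
    (cofM U i (m + 1)).det = (-(U (m + 1) m)) * (cofM U i m).det := by
  rw [Matrix.det_succ_row (cofM U i (m + 1)) (Fin.last m)]
  rw [Finset.sum_eq_single (Fin.last m)]
  · have h1 : (cofM U i (m + 1)) (Fin.last m) (Fin.last m) = -(U (m + 1) m) := by
      simp [cofM, Fin.val_last, Nat.not_lt.mpr him]
    have h2 : (cofM U i (m + 1)).submatrix (Fin.last m).succAbove (Fin.last m).succAbove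
        = cofM U i m := by
      ext k l
      simp [cofM, Fin.succAbove_last, Matrix.submatrix_apply]
    rw [h1, h2, Fin.val_last]
    have : (-1 : ℝ) ^ (m + m) = 1 := by
      rw [← two_mul]; simp [pow_mul]
    rw [this, one_mul]
  · intro j _ hj
    have hjm : (j : ℕ) < m := by
      have := j.isLt
      have : (j : ℕ) ≠ m := fun h => hj (Fin.ext (by simp [h]))
      omega
    have h0 : (cofM U i (m + 1)) (Fin.last m) j = 0 := by
      simp only [cofM, Matrix.of_apply, Fin.val_last]
      rw [if_neg (Nat.not_lt.mpr him), if_neg (by omega : ¬ m + 1 = (j : ℕ)),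
        hut (m + 1) j (by omega)]
      ring
    rw [h0]; ring
  · simp

lemma cofM_det (U : ℕ → ℕ → ℝ) (hut : ∀ i j, j + 1 < i → U i j = 0) :
    ∀ d i, (cofM U i (i + d)).det
      = (-1 : ℝ) ^ d * prodSub U i (i + d) * detOneSub U i := by
  intro d
  induction d with
  | zero =>
    intro i
    rw [Nat.add_zero, cofM_base]
    simp [prodSub, Finset.Icc_eq_empty (by omega : ¬ i + 1 ≤ i)]
  | succ d ih =>
    intro i
    have hstep := cofM_step U hut (i := i) (m := i + d) (by omega)
    rw [show i + (d + 1) = (i + d) + 1 from rfl, hstep, ih i]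
    have hprod : prodSub U i (i + d + 1)
        = prodSub U i (i + d) * U (i + d + 1) (i + d) := by
      unfold prodSub
      rw [Finset.prod_Icc_succ_top (by omega)]
      simp
    rw [hprod]
    ring

lemma succAbove_val {b : ℕ} (i : Fin (b + 1)) (k : Fin b) :
    ((i.succAbove k : Fin (b + 1)) : ℕ)
      = if (k : ℕ) < (i : ℕ) then (k : ℕ) else (k : ℕ) + 1 := by
  rw [Fin.succAbove]
  simp only [Fin.lt_def, Fin.coe_castSucc]
  split_ifs with h <;> simp

lemma det_rec (U : ℕ → ℕ → ℝ) (hut : ∀ i j, j + 1 < i → U i j = 0) (b : ℕ) :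
    detOneSub U (b + 1)
      = detOneSub U b
        - ∑ a ∈ Finset.range (b + 1), prodSub U a b * (U a b * detOneSub U a) := by
  have hD : detOneSub U (b + 1)
      = Matrix.det (1 - Matrix.of fun i j : Fin (b + 1) => U i.1 j.1) := rfl
  set A : Matrix (Fin (b + 1)) (Fin (b + 1)) ℝ :=
    1 - Matrix.of fun i j : Fin (b + 1) => U i.1 j.1 with hA
  have hsub : ∀ i : Fin (b + 1),
      A.submatrix i.succAbove (Fin.last b).succAbove = cofM U i.1 b := by
    intro i
    ext k l
    simp only [Matrix.submatrix_apply, Fin.succAbove_last, hA, Matrix.sub_apply,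
      Matrix.one_apply, Matrix.of_apply, cofM, Fin.ext_iff, succAbove_val,
      Fin.coe_castSucc]
  have step1 : detOneSub U (b + 1)
      = ∑ i : Fin (b + 1),
          ((if i = Fin.last b then (1 : ℝ) else 0) - U i.1 b)
            * (prodSub U i.1 b * detOneSub U i.1) := by
    rw [hD, Matrix.det_succ_column A (Fin.last b)]
    refine Finset.sum_congr rfl fun i _ => ?_
    have hib : (i : ℕ) ≤ b := by omega
    have hbi : i.1 + (b - i.1) = b := by omega
    have h1 : (cofM U i.1 b).det
        = (-1 : ℝ) ^ (b - i.1) * prodSub U i.1 b * detOneSub U i.1 := by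
      have := cofM_det U hut (b - i.1) i.1
      rwa [hbi] at this
    have hAval : A i (Fin.last b) = (if i = Fin.last b then (1 : ℝ) else 0) - U i.1 b := by
      simp [hA, Matrix.one_apply, Fin.val_last]
    rw [hsub i, h1, hAval, Fin.val_last]
    have hsgn : (-1 : ℝ) ^ (i.1 + b) * (-1 : ℝ) ^ (b - i.1) = 1 := by
      rw [← pow_add, show i.1 + b + (b - i.1) = 2 * b by omega]
      simp [pow_mul]
    calc (-1 : ℝ) ^ (i.1 + b)
          * ((if i = Fin.last b then (1 : ℝ) else 0) - U i.1 b)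
          * ((-1 : ℝ) ^ (b - i.1) * prodSub U i.1 b * detOneSub U i.1)
        = ((-1 : ℝ) ^ (i.1 + b) * (-1 : ℝ) ^ (b - i.1))
            * (((if i = Fin.last b then (1 : ℝ) else 0) - U i.1 b)
              * (prodSub U i.1 b * detOneSub U i.1)) := by ring
      _ = _ := by rw [hsgn, one_mul]
  rw [step1]
  simp only [sub_mul]
  rw [Finset.sum_sub_distrib]
  congr 1
  · have : ∀ i : Fin (b + 1),
        (if i = Fin.last b then (1 : ℝ) else 0) * (prodSub U i.1 b * detOneSub U i.1)
          = if i = Fin.last b then prodSub U i.1 b * detOneSub U i.1 else 0 := by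
      intro i; split_ifs <;> ring
    rw [Finset.sum_congr rfl fun i _ => this i, Finset.sum_ite_eq' Finset.univ (Fin.last b)]
    simp [prodSub, Finset.Icc_eq_empty (by omega : ¬ b + 1 ≤ b), Fin.val_last]
  · rw [← Fin.sum_univ_eq_sum_range (fun a => prodSub U a b * (U a b * detOneSub U a))]
    refine Finset.sum_congr rfl fun i _ => ?_
    ring

lemma step_pos (U : ℕ → ℕ → ℝ) (hut : ∀ i j, j + 1 < i → U i j = 0) :
    ∀ (n : ℕ) (x : ℕ → ℕ) (j : ℕ), j + 1 ≤ x 0 → x n = j →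
      (∀ k, k < n → 0 < U (x k) (x (k + 1))) → 0 < U (j + 1) j := by
  intro n
  induction n with
  | zero => intro x j h1 h2; omega
  | succ n ih =>
    intro x j h1 h2 h3
    by_cases hx1 : j + 1 ≤ x 1
    · exact ih (fun k => x (k + 1)) j hx1 h2 (fun k hk => h3 (k + 1) (by omega))
    · have h0 := h3 0 (by omega)
      have hle : x 0 ≤ x 1 + 1 := by
        by_contra hc
        push_neg at hc
        rw [hut (x 0) (x 1) (by omega)] at h0
        exact lt_irrefl 0 h0
      have hx0 : x 0 = j + 1 := by omega
      have hx1' : x 1 = j := by omega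
      rwa [hx0, hx1'] at h0

/-- Theorem 2.1 (uniqueness part): the invariant measure of an irreducible almost
upper triangular transition matrix is unique up to a positive multiplicative factor,
and is given by `π a = det(Id − U_{[0,a−1]}) / ∏_{j=1}^a U j (j−1)`. -/
theorem invariant_measure_unique_almost_upper_triangular (U : ℕ → ℕ → ℝ)
    (hnn : ∀ i j, 0 ≤ U i j)
    (hrow : ∀ i, HasSum (fun j => U i j) 1)
    (hut : ∀ i j, j + 1 < i → U i j = 0)
    (hirr : MatIrreducible U)
    (pi : ℕ → ℝ)
    (hpi : ∀ a, pi a = detOneSub U a / ∏ j ∈ Finset.Icc 1 a, U j (j - 1))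
    (pi' : ℕ → ℝ)
    (hpi'nn : ∀ a, 0 ≤ pi' a)
    (hpi'ne : ∃ a, pi' a ≠ 0)
    (hpi'inv : ∀ b, HasSum (fun a => pi' a * U a b) (pi' b)) :
    ∃ c : ℝ, 0 < c ∧ ∀ a, pi' a = c * pi a := by
  -- positivity of the subdiagonal
  have hpos : ∀ j, 0 < U (j + 1) j := by
    intro j
    obtain ⟨n, x, hn, hx0, hxn, hstep⟩ := hirr (j + 1) j
    exact step_pos U hut n x j (by omega) hxn hstep
  -- the invariance equation is a finite sum
  have hfin : ∀ b, (∑ a ∈ Finset.range (b + 2), pi' a * U a b) = pi' b := by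
    intro b
    have h2 : HasSum (fun a => pi' a * U a b)
        (∑ a ∈ Finset.range (b + 2), pi' a * U a b) := by
      apply hasSum_sum_of_ne_finset_zero
      intro a ha
      rw [Finset.mem_range] at ha
      rw [hut a b (by omega), mul_zero]
    exact h2.unique (hpi'inv b)
  have hrec : ∀ b, pi' (b + 1) * U (b + 1) b
      = pi' b - ∑ a ∈ Finset.range (b + 1), pi' a * U a b := by
    intro b
    have := hfin b
    rw [Finset.sum_range_succ] at this
    linarith
  -- pi' 0 > 0
  have hz : pi' 0 = 0 → ∀ a, pi' a = 0 := by
    intro h0 a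
    induction a using Nat.strong_induction_on with
    | _ a ih =>
      match a with
      | 0 => exact h0
      | b + 1 =>
        have h := hrec b
        have hsum : ∑ a ∈ Finset.range (b + 1), pi' a * U a b = 0 := by
          apply Finset.sum_eq_zero
          intro a ha
          rw [Finset.mem_range] at ha
          rw [ih a (by omega), zero_mul]
        rw [hsum, ih b (by omega), sub_zero] at h
        exact (mul_eq_zero.mp h).resolve_right (ne_of_gt (hpos b))
  have hc : 0 < pi' 0 := by
    rcases (hpi'nn 0).lt_or_eq with h | h
    · exact h
    · exfalso
      obtain ⟨a, ha⟩ := hpi'ne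
      exact ha (hz h.symm a)
  -- positivity of partial products
  have hPpos : ∀ a b, a ≤ b → 0 < prodSub U a b := by
    intro a b _
    apply Finset.prod_pos
    intro j hj
    rw [Finset.mem_Icc] at hj
    have h := hpos (j - 1)
    rwa [show j - 1 + 1 = j by omega] at h
  have hPsplit : ∀ a b, a ≤ b → prodSub U 0 b = prodSub U 0 a * prodSub U a b := by
    intro a b hab
    unfold prodSub
    rw [Finset.Icc_add_one_left_eq_Ioc, Finset.Icc_add_one_left_eq_Ioc, Finset.Icc_add_one_left_eq_Ioc,
      ← Finset.prod_Ioc_consecutive _ (Nat.zero_le a) hab]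
  -- key identity
  have key : ∀ a, pi' a * prodSub U 0 a = pi' 0 * detOneSub U a := by
    intro a
    induction a using Nat.strong_induction_on with
    | _ a ih =>
      match a with
      | 0 => simp [prodSub, detOneSub, Finset.Icc_eq_empty (by omega : ¬ 0 + 1 ≤ 0)]
      | b + 1 =>
        have hP : prodSub U 0 (b + 1) = prodSub U 0 b * U (b + 1) b := by
          unfold prodSub
          rw [Finset.prod_Icc_succ_top (by omega)]
          simp
        calc pi' (b + 1) * prodSub U 0 (b + 1)
            = (pi' (b + 1) * U (b + 1) b) * prodSub U 0 b := by rw [hP]; ring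
          _ = (pi' b - ∑ a ∈ Finset.range (b + 1), pi' a * U a b) * prodSub U 0 b := by
              rw [hrec b]
          _ = pi' b * prodSub U 0 b
              - ∑ a ∈ Finset.range (b + 1), (pi' a * U a b) * prodSub U 0 b := by
              rw [sub_mul, Finset.sum_mul]
          _ = pi' 0 * detOneSub U b
              - ∑ a ∈ Finset.range (b + 1),
                  pi' 0 * (prodSub U a b * (U a b * detOneSub U a)) := by
              rw [ih b (by omega)]
              congr 1
              refine Finset.sum_congr rfl fun a ha => ?_
              rw [Finset.mem_range] at ha
              have ha' : a ≤ b := by omega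
              rw [hPsplit a b ha']
              have hkey := ih a (by omega)
              calc pi' a * U a b * (prodSub U 0 a * prodSub U a b)
                  = (pi' a * prodSub U 0 a) * (U a b * prodSub U a b) := by ring
                _ = (pi' 0 * detOneSub U a) * (U a b * prodSub U a b) := by rw [hkey]
                _ = pi' 0 * (prodSub U a b * (U a b * detOneSub U a)) := by ring
          _ = pi' 0 * (detOneSub U b
              - ∑ a ∈ Finset.range (b + 1), prodSub U a b * (U a b * detOneSub U a)) := by
              rw [mul_sub, Finset.mul_sum]
          _ = pi' 0 * detOneSub U (b + 1) := by rw [det_rec U hut b]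
  refine ⟨pi' 0, hc, fun a => ?_⟩
  rw [hpi a]
  have hkey := key a
  have hPa : (0 : ℝ) < ∏ j ∈ Finset.Icc 1 a, U j (j - 1) := by
    rcases Nat.eq_zero_or_pos a with h | h
    · subst h; simp [Finset.Icc_eq_empty (by omega : ¬ 1 ≤ 0)]
    · exact hPpos 0 a (by omega)
  have hprodeq : prodSub U 0 a = ∏ j ∈ Finset.Icc 1 a, U j (j - 1) := rfl
  rw [hprodeq] at hkey
  field_simp
  linarith [hkey]
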